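/- For every n ≥ 0, the Apéry number A(n) = Σ_{k=0}^n binom(n,k)^2·binom(n+k,k)^2 satisfies A(2n) ≡ 1 (mod 8) and A(2n+1) ≡ 5 (mod 8). -/

import Mathlib

open Finset

-- subset-of-subset sum
lemma sum_choose_mul_choose (n j : ℕ) (hj : j ≤ n) :
    ∑ k ∈ Finset.range (n+1), n.choose k * k.choose j = n.choose j * 2^(n-j) := by
  have h1 : ∑ k ∈ Finset.range (n+1), n.choose k * k.choose j
      = ∑ k ∈ Finset.Ico j (n+1), n.choose k * k.choose j := by
    refine (Finset.sum_subset (fun x hx => ?_) (fun x hx hx' => ?_)).symm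
    · simp only [Finset.mem_Ico] at hx; simp only [Finset.mem_range]; omega
    · simp only [Finset.mem_range] at hx
      simp only [Finset.mem_Ico] at hx'
      rw [Nat.choose_eq_zero_of_lt (show x < j by omega), mul_zero]
  rw [h1, Finset.sum_Ico_eq_sum_range]
  have h2 : ∀ i ∈ Finset.range (n + 1 - j), n.choose (j+i) * (j+i).choose j
      = n.choose j * (n-j).choose i := by
    intro i hi
    simp only [Finset.mem_range] at hi
    rw [Nat.choose_mul (by omega)]
    congr 2
    omega
  rw [Finset.sum_congr rfl h2, ← Finset.mul_sum]
  have : n + 1 - j = (n - j) + 1 := by omega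
  rw [this, Nat.sum_range_choose]

lemma delannoy_eq (n : ℕ) :
    ∑ k ∈ Finset.range (n+1), n.choose k * (n+k).choose k
      = ∑ j ∈ Finset.range (n+1), n.choose j ^ 2 * 2^(n-j) := by
  have vand : ∀ k ∈ Finset.range (n+1), n.choose k * (n+k).choose k
      = ∑ j ∈ Finset.range (n+1), n.choose k * (n.choose j * k.choose j) := by
    intro k hk
    simp only [Finset.mem_range] at hk
    have h1 : (n+k).choose k = ∑ j ∈ Finset.range (k+1), n.choose j * k.choose (k - j) := by
      rw [Nat.add_choose_eq, Finset.Nat.sum_antidiagonal_eq_sum_range_succ_mk]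
    have h2 : ∀ j ∈ Finset.range (k+1), n.choose j * k.choose (k - j)
        = n.choose j * k.choose j := by
      intro j hj
      simp only [Finset.mem_range] at hj
      rw [Nat.choose_symm (by omega)]
    rw [h1, Finset.sum_congr rfl h2]
    have h3 : ∑ j ∈ Finset.range (k+1), n.choose j * k.choose j
        = ∑ j ∈ Finset.range (n+1), n.choose j * k.choose j := by
      refine Finset.sum_subset (fun x hx => ?_) (fun x hx hx' => ?_)
      · simp only [Finset.mem_range] at *; omega
      · simp only [Finset.mem_range] at hx hx'
        rw [Nat.choose_eq_zero_of_lt (show k < x by omega), mul_zero]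
    rw [h3, Finset.mul_sum]
  rw [Finset.sum_congr rfl vand, Finset.sum_comm]
  refine Finset.sum_congr rfl (fun j hj => ?_)
  simp only [Finset.mem_range] at hj
  have : ∀ k ∈ Finset.range (n+1), n.choose k * (n.choose j * k.choose j)
      = n.choose j * (n.choose k * k.choose j) := by intro k _; ring
  rw [Finset.sum_congr rfl this, ← Finset.mul_sum,
    sum_choose_mul_choose n j (by omega), pow_two]
  ring

lemma delannoy_mod4 (n : ℕ) :
    (∑ k ∈ Finset.range (n+1), n.choose k * (n+k).choose k) % 4 = (1 + 2*n) % 4 := by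
  rw [delannoy_eq]
  cases n with
  | zero => decide
  | succ m =>
    rw [Finset.sum_range_succ, Finset.sum_range_succ]
    have h0 : 4 ∣ ∑ j ∈ Finset.range m, (m+1).choose j ^ 2 * 2^(m+1-j) := by
      refine Finset.dvd_sum (fun j hj => ?_)
      simp only [Finset.mem_range] at hj
      have : m + 1 - j = (m - 1 - j) + 2 := by omega
      rw [this, pow_add]
      exact Dvd.dvd.mul_left (by norm_num) _
    obtain ⟨q, hq⟩ := h0
    have h1 : (m+1).choose m = m + 1 := Nat.choose_succ_self_right m
    have h2 : (m+1).choose (m+1) = 1 := Nat.choose_self _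
    have h3 : m + 1 - m = 1 := by omega
    rw [hq, h1, h2, h3]
    simp only [Nat.sub_self, pow_zero, one_pow, mul_one, pow_one]
    have h4 : (m+1)^2 % 2 = (m+1) % 2 := by
      rcases Nat.even_or_odd (m+1) with h | h
      · obtain ⟨t, ht⟩ := h; rw [ht]; ring_nf; omega
      · obtain ⟨t, ht⟩ := h; rw [ht]; ring_nf; omega
    set d := m + 1
    set e := d ^ 2
    omega

lemma term_even (n k : ℕ) (hk1 : 1 ≤ k) (hkn : k ≤ n) :
    2 ∣ n.choose k * (n+k).choose k := by
  have key : (n+k).choose (2*k) * (2*k).choose k = (n+k).choose k * n.choose k := by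
    have := Nat.choose_mul (n := n + k) (k := 2*k) (s := k) (by omega)
    rw [this]
    congr 2 <;> omega
  have h2 : 2 ∣ (2*k).choose k := by
    have := Nat.two_dvd_centralBinom_of_one_le (n := k) (by omega)
    rwa [Nat.centralBinom_eq_two_mul_choose] at this
  have : 2 ∣ (n+k).choose k * n.choose k := key ▸ Dvd.dvd.mul_left h2 _
  rwa [mul_comm] at this

lemma sq_even_mod8 (c : ℕ) (h : 2 ∣ c) : c^2 % 8 = 2*c % 8 := by
  obtain ⟨d, rfl⟩ := h
  have : d^2 % 2 = d % 2 := by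
    rcases Nat.even_or_odd d with ⟨t, ht⟩ | ⟨t, ht⟩ <;> (rw [ht]; ring_nf; omega)
  have e2 : (2*d)^2 = 4 * d^2 := by ring
  rw [e2]
  set e := d^2
  omega

lemma apery_mod8 (n : ℕ) :
    (∑ k ∈ Finset.range (n + 1), (n.choose k) ^ 2 * ((n + k).choose k) ^ 2) % 8
      = (1 + 4*n) % 8 := by
  have hsq : ∀ k, (n.choose k) ^ 2 * ((n + k).choose k) ^ 2
      = (n.choose k * (n+k).choose k)^2 := fun k => (mul_pow _ _ 2).symm
  simp only [hsq]
  rw [Finset.sum_range_succ']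
  have hc0 : (n.choose 0 * (n + 0).choose 0)^2 = 1 := by simp
  rw [hc0]
  have step1 : (∑ k ∈ Finset.range n, ((n.choose (k+1) * (n+(k+1)).choose (k+1)))^2) % 8
      = (2 * ∑ k ∈ Finset.range n, (n.choose (k+1) * (n+(k+1)).choose (k+1))) % 8 := by
    rw [Finset.sum_nat_mod]
    have : ∀ k ∈ Finset.range n, ((n.choose (k+1) * (n+(k+1)).choose (k+1)))^2 % 8 = (2 * (n.choose (k+1) * (n+(k+1)).choose (k+1))) % 8 := by
      intro k hk
      simp only [Finset.mem_range] at hk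
      exact sq_even_mod8 _ (term_even n (k+1) (by omega) (by omega))
    rw [Finset.sum_congr rfl this, ← Finset.sum_nat_mod, Finset.mul_sum]
  have step2 : (∑ k ∈ Finset.range n, (n.choose (k+1) * (n+(k+1)).choose (k+1)) + 1) % 4 = (1 + 2*n) % 4 := by
    have hd := delannoy_mod4 n
    rw [Finset.sum_range_succ'] at hd
    simpa using hd
  set T := ∑ k ∈ Finset.range n, (n.choose (k+1) * (n+(k+1)).choose (k+1))
  set X := ∑ k ∈ Finset.range n, ((n.choose (k+1) * (n+(k+1)).choose (k+1)))^2
  omega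



/-- The Apéry numbers `A(n) = Σ_k binom(n,k)² binom(n+k,k)²` satisfy
`A(2n) ≡ 1 (mod 8)` and `A(2n+1) ≡ 5 (mod 8)`. -/
theorem apery3_mod_eight (A : ℕ → ℕ)
    (hA : ∀ n, A n = ∑ k ∈ Finset.range (n + 1), (n.choose k) ^ 2 * ((n + k).choose k) ^ 2)
    (n : ℕ) :
    A (2 * n) ≡ 1 [MOD 8] ∧ A (2 * n + 1) ≡ 5 [MOD 8] := by
  have h1 := apery_mod8 (2 * n)
  have h2 := apery_mod8 (2 * n + 1)
  rw [← hA] at h1 h2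
  constructor <;> (unfold Nat.ModEq; omega)
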